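/- Let n ≥ 2 be an integer and let (a_1, a_2, …, a_n) be a non-decreasing sequence of non-negative integers with a_1 = 0, a_n = n−1, and a_i ≤ i−1 for all 1 ≤ i ≤ n. Then the number of labeled trees T on n vertices whose uncover sequence satisfies k_i(T) = a_i for all 1 ≤ i ≤ n is exactly ∏_{i=1}^{n−2} ( binom(i − a_i − 1, a_{i+1} − a_i − 1)·(i+1) + binom(i − a_i − 1, a_{i+1} − a_i) ), where binomial coefficients with negative lower index are 0. -/

import Mathlib

open scoped Classical
open Filter Topology MeasureTheory

/-- The finite set of all labeled trees on vertex set `Fin n`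
(vertex `v : Fin n` carries label `v + 1 ∈ {1, …, n}`). -/
noncomputable def treeSet (n : ℕ) : Finset (SimpleGraph (Fin n)) :=
  Finset.univ.filter fun T => T.IsTree

/-- `uncoverEdges T j` is the number of edges of the subgraph of `T` induced by the
first `j` vertices (those with label `≤ j`, i.e. `Fin`-value `< j`);
this is `k_j(T)`, the number of uncovered edges after `j` uncover steps. -/
noncomputable def uncoverEdges {n : ℕ} (T : SimpleGraph (Fin n)) (j : ℕ) : ℕ :=
  (Finset.univ.filter fun p : Fin n × Fin n =>
    T.Adj p.1 p.2 ∧ p.1 < p.2 ∧ (p.2 : ℕ) < j).card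

/-- The subgraph (on the same vertex set) induced by the vertices with label `≤ k`:
the forest uncovered after `k` steps. -/
def restrictBelow {n : ℕ} (T : SimpleGraph (Fin n)) (k : ℕ) : SimpleGraph (Fin n) where
  Adj v w := T.Adj v w ∧ (v : ℕ) < k ∧ (w : ℕ) < k
  symm := ⟨fun _ _ ⟨h, hv, hw⟩ => ⟨h.symm, hw, hv⟩⟩
  loopless := ⟨fun v h => T.irrefl h.1⟩

/-- Binomial coefficient with an integer lower index; it is `0` for negative lower index. -/
def chooseZ (m : ℕ) (j : ℤ) : ℕ := if 0 ≤ j then m.choose j.toNat else 0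

section AddStar

variable {V : Type*} [DecidableEq V]

/-- Add a star centered at `v` with leaves `N` to `G`. -/
def addStar (G : SimpleGraph V) (v : V) (N : Finset V) : SimpleGraph V where
  Adj x y := x ≠ y ∧ (G.Adj x y ∨ (x = v ∧ y ∈ N) ∨ (y = v ∧ x ∈ N))
  symm := ⟨by
    rintro x y ⟨hne, h⟩
    exact ⟨hne.symm, by tauto⟩⟩
  loopless := ⟨by rintro x ⟨hne, -⟩; exact hne rfl⟩

variable {G : SimpleGraph V} {v : V} {N : Finset V}

lemma addStar_adj {x y : V} :
    (addStar G v N).Adj x y ↔ x ≠ y ∧ (G.Adj x y ∨ (x = v ∧ y ∈ N) ∨ (y = v ∧ x ∈ N)) :=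
  Iff.rfl

lemma le_addStar : G ≤ addStar G v N := by
  intro x y h; exact ⟨G.ne_of_adj h, Or.inl h⟩

variable (hGv : ∀ y, ¬ G.Adj v y) (hvN : v ∉ N)

include hGv hvN in
lemma addStar_adj_v {y : V} : (addStar G v N).Adj v y ↔ y ∈ N := by
  constructor
  · rintro ⟨hne, h | ⟨-, hy⟩ | ⟨rfl, hy⟩⟩
    · exact absurd h (hGv y)
    · exact hy
    · exact absurd hy hvN
  · intro hy
    refine ⟨fun h => hvN (h ▸ hy), Or.inr (Or.inl ⟨rfl, hy⟩)⟩

include hGv hvN in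
lemma addStar_adj_v' {y : V} : (addStar G v N).Adj y v ↔ y ∈ N := by
  rw [SimpleGraph.adj_comm]; exact addStar_adj_v hGv hvN

lemma addStar_adj_of_ne {x y : V} (hx : x ≠ v) (hy : y ≠ v) :
    (addStar G v N).Adj x y ↔ G.Adj x y := by
  constructor
  · rintro ⟨hne, h | ⟨rfl, -⟩ | ⟨rfl, -⟩⟩
    · exact h
    · exact absurd rfl hx
    · exact absurd rfl hy
  · intro h; exact le_addStar h

include hGv in
/-- a `G`-walk between vertices other than `v` avoids `v`. -/
lemma not_mem_support_of_walk {x y : V} (p : G.Walk x y) (hx : x ≠ v) (hy : y ≠ v) :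
    v ∉ p.support := by
  induction p with
  | nil => simpa using hx.symm
  | @cons a b c h q ih =>
    have hb : b ≠ v := by
      rintro rfl
      exact hGv a h.symm
    simp only [SimpleGraph.Walk.support_cons, List.mem_cons]
    rintro (rfl | hmem)
    · exact hx rfl
    · exact ih hb hy hmem

/-- a walk in `addStar G v N` avoiding `v` yields reachability in `G`. -/
lemma reachable_of_walk_avoid {x y : V} (p : (addStar G v N).Walk x y)
    (hv : v ∉ p.support) : G.Reachable x y := by
  induction p with
  | nil => exact SimpleGraph.Reachable.refl _
  | @cons a b c h q ih =>
    simp only [SimpleGraph.Walk.support_cons, List.mem_cons] at hv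
    push_neg at hv
    have hb : b ≠ v := fun hb => hv.2 (hb ▸ q.start_mem_support)
    have ha : a ≠ v := fun ha => hv.1 ha.symm
    have : G.Adj a b := (addStar_adj_of_ne ha hb).mp h
    exact (this.reachable).trans (ih hv.2)

include hGv in
/-- from any vertex reaching `v` in `addStar G v N`, there is an `N`-vertex
`G`-reachable from it. -/
lemma exists_attach_of_reachable {x w : V} (p : (addStar G v N).Walk x w) :
    w = v → x ≠ v → ∃ z ∈ N, G.Reachable x z := by
  induction p with
  | nil => exact fun hw hx => absurd hw hx
  | @cons a b c h q ih =>
    intro hw hx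
    subst c
    by_cases hb : b = v
    · subst hb
      have : a ∈ N := by
        rcases h with ⟨hne, hadj | ⟨rfl, -⟩ | ⟨-, ha⟩⟩
        · exact absurd hadj.symm (hGv a)
        · exact absurd rfl hx
        · exact ha
      exact ⟨a, this, SimpleGraph.Reachable.refl _⟩
    · obtain ⟨z, hz, hr⟩ := ih rfl hb
      have : G.Adj a b := (addStar_adj_of_ne hx hb).mp h
      exact ⟨z, hz, this.reachable.trans hr⟩

include hGv in
lemma exists_attach_of_reachable' {x : V} (h : (addStar G v N).Reachable x v) (hx : x ≠ v) :
    ∃ z ∈ N, G.Reachable x z := by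
  obtain ⟨p⟩ := h
  exact exists_attach_of_reachable hGv p rfl hx

/-- if `x` does not reach `v`, reachability in `addStar` from `x` coincides with `G`. -/
lemma reachable_addStar_iff {x y : V} (hxv : ¬ (addStar G v N).Reachable x v) :
    (addStar G v N).Reachable x y ↔ G.Reachable x y := by
  constructor
  · rintro ⟨p⟩
    by_cases hv : v ∈ p.support
    · exact absurd ⟨p.takeUntil v hv⟩ hxv
    · exact reachable_of_walk_avoid p hv
  · exact fun h => h.mono le_addStar

end AddStar

section AddStar2
open SimpleGraph

variable {V : Type*} [DecidableEq V]
variable {G : SimpleGraph V} {v : V} {N : Finset V}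
variable (hGv : ∀ y, ¬ G.Adj v y) (hvN : v ∉ N)

include hGv hvN in
/-- If `addStar G v N` is acyclic then distinct vertices of `N` lie in distinct
components of `G`. -/
lemma sep_of_addStar_acyclic (hac : (addStar G v N).IsAcyclic) {z1 z2 : V}
    (h1 : z1 ∈ N) (h2 : z2 ∈ N) (hr : G.Reachable z1 z2) : z1 = z2 := by
  by_contra hne
  have hadj : (addStar G v N).Adj v z1 := (addStar_adj_v hGv hvN).mpr h1
  have hbridge := (SimpleGraph.isAcyclic_iff_forall_adj_isBridge.mp hac) hadj
  rw [SimpleGraph.isBridge_iff, SimpleGraph.reachable_delete_edges_iff_exists_walk] at hbridge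
  apply hbridge
  obtain ⟨p⟩ := hr.symm
  have hz1 : z1 ≠ v := fun h => hvN (h ▸ h1)
  have hz2 : z2 ≠ v := fun h => hvN (h ▸ h2)
  refine ⟨Walk.cons ((addStar_adj_v hGv hvN).mpr h2)
    (p.transfer (addStar G v N) fun e he =>
      SimpleGraph.edgeSet_mono le_addStar (p.edges_subset_edgeSet he)), ?_⟩
  rw [Walk.edges_cons, Walk.edges_transfer]
  intro hmem
  rcases List.mem_cons.mp hmem with h | h
  · rw [Sym2.eq_iff] at h
    rcases h with ⟨-, h⟩ | ⟨h, -⟩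
    · exact hne h
    · exact hz2 h.symm
  · exact hGv z1 (p.adj_of_mem_edges h)

variable (hsep : ∀ z1 ∈ N, ∀ z2 ∈ N, G.Reachable z1 z2 → z1 = z2)

include hGv hvN hsep in
lemma no_cycle_at_center (c : (addStar G v N).Walk v v) : ¬ c.IsCycle := by
  intro hc
  cases c with
  | nil => simpa using hc.three_le_length
  | @cons _ b _ h q =>
    have hbN : b ∈ N := (addStar_adj_v hGv hvN).mp h
    cases q with
    | nil => exact hvN hbN
    | @cons _ x _ hq q' =>
      obtain ⟨m, r, h2, heq⟩ := Walk.exists_cons_eq_concat hq q'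
      have hmN : m ∈ N := (addStar_adj_v' hGv hvN).mp h2
      have hc' : (Walk.cons h (r.concat h2)).IsCycle := by rwa [← heq]
      have hsupp := hc'.2
      rw [Walk.support_cons, List.tail_cons, Walk.support_concat] at hsupp
      have hvr : v ∉ r.support := by
        rw [List.nodup_append] at hsupp
        intro hmem
        exact hsupp.2.2 v hmem v (List.mem_singleton_self v) rfl
      have hbm : b = m := hsep b hbN m hmN (reachable_of_walk_avoid r hvr)
      subst hbm
      have hedges := hc'.1.1.edges_nodup
      rw [Walk.edges_cons, Walk.edges_concat, List.nodup_cons] at hedges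
      apply hedges.1
      have : s(v, b) = s(b, v) := Sym2.eq_swap
      rw [this]
      simp

include hGv hvN hsep in
lemma acyclic_addStar (hG : G.IsAcyclic) : (addStar G v N).IsAcyclic := by
  intro u c hc
  by_cases hv : v ∈ c.support
  · exact no_cycle_at_center hGv hvN hsep (c.rotate v hv) (hc.rotate hv)
  · have hedges : ∀ e ∈ c.edges, e ∈ G.edgeSet := by
      intro e he
      induction e using Sym2.ind with
      | _ a b =>
        have ha : a ≠ v := fun h => hv (h ▸ c.fst_mem_support_of_mem_edges he)
        have hb : b ≠ v := fun h => hv (h ▸ c.snd_mem_support_of_mem_edges he)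
        exact (addStar_adj_of_ne ha hb).mp (c.adj_of_mem_edges he)
    exact hG (c.transfer G hedges) (hc.transfer hedges)

end AddStar2

section Uncover
open SimpleGraph

variable {n : ℕ}

lemma uncoverEdges_congr {G H : SimpleGraph (Fin n)} {j : ℕ}
    (h : ∀ x y : Fin n, (x : ℕ) < j → (y : ℕ) < j → (G.Adj x y ↔ H.Adj x y)) :
    uncoverEdges G j = uncoverEdges H j := by
  unfold uncoverEdges
  congr 1
  apply Finset.filter_congr
  intro p _
  constructor
  · rintro ⟨ha, hlt, hj⟩
    exact ⟨(h p.1 p.2 (lt_trans hlt hj) hj).mp ha, hlt, hj⟩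
  · rintro ⟨ha, hlt, hj⟩
    exact ⟨(h p.1 p.2 (lt_trans hlt hj) hj).mpr ha, hlt, hj⟩

lemma uncoverEdges_restrictBelow {T : SimpleGraph (Fin n)} {i j : ℕ} (hji : j ≤ i) :
    uncoverEdges (restrictBelow T i) j = uncoverEdges T j := by
  apply uncoverEdges_congr
  intro x y hx hy
  constructor
  · rintro ⟨h, -, -⟩; exact h
  · intro h; exact ⟨h, lt_of_lt_of_le hx hji, lt_of_lt_of_le hy hji⟩

lemma uncoverEdges_addStar_le {G : SimpleGraph (Fin n)} {vi : Fin n} {N : Finset (Fin n)}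
    {i j : ℕ} (hvi : (vi : ℕ) = i) (hji : j ≤ i) :
    uncoverEdges (addStar G vi N) j = uncoverEdges G j := by
  apply uncoverEdges_congr
  intro x y hx hy
  have hxv : x ≠ vi := fun h => by subst h; omega
  have hyv : y ≠ vi := fun h => by subst h; omega
  exact addStar_adj_of_ne hxv hyv

lemma uncoverEdges_edges_lt {G : SimpleGraph (Fin n)} {i j : ℕ}
    (hG : ∀ x y : Fin n, G.Adj x y → (x : ℕ) < i ∧ (y : ℕ) < i) (hij : i ≤ j) :
    uncoverEdges G j = uncoverEdges G i := by
  unfold uncoverEdges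
  congr 1
  apply Finset.filter_congr
  intro p _
  constructor
  · rintro ⟨ha, hlt, -⟩
    exact ⟨ha, hlt, (hG _ _ ha).2⟩
  · rintro ⟨ha, hlt, h2⟩
    exact ⟨ha, hlt, lt_of_lt_of_le h2 hij⟩

lemma uncoverEdges_addStar_succ {G : SimpleGraph (Fin n)} {vi : Fin n} {N : Finset (Fin n)}
    {i : ℕ} (hvi : (vi : ℕ) = i)
    (hG : ∀ x y : Fin n, G.Adj x y → (x : ℕ) < i ∧ (y : ℕ) < i)
    (hN : ∀ z ∈ N, (z : ℕ) < i) :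
    uncoverEdges (addStar G vi N) (i + 1) = uncoverEdges G i + N.card := by
  classical
  have hGv : ∀ y, ¬ G.Adj vi y := fun y h => by have := (hG _ _ h).1; omega
  have hvN : vi ∉ N := fun h => by have := hN _ h; omega
  unfold uncoverEdges
  rw [← Finset.card_filter_add_card_filter_not
    (s := Finset.univ.filter fun p : Fin n × Fin n =>
      (addStar G vi N).Adj p.1 p.2 ∧ p.1 < p.2 ∧ (p.2 : ℕ) < i + 1)
    (p := fun p => (p.2 : ℕ) < i)]
  congr 1
  · rw [Finset.filter_filter]
    have : (Finset.univ.filter fun p : Fin n × Fin n =>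
        ((addStar G vi N).Adj p.1 p.2 ∧ p.1 < p.2 ∧ (p.2 : ℕ) < i + 1) ∧ (p.2 : ℕ) < i)
        = Finset.univ.filter fun p : Fin n × Fin n =>
        G.Adj p.1 p.2 ∧ p.1 < p.2 ∧ (p.2 : ℕ) < i := by
      apply Finset.filter_congr
      intro p _
      constructor
      · rintro ⟨⟨ha, hlt, -⟩, h2⟩
        have hyv : p.2 ≠ vi := fun h => by subst h; omega
        have hxv : p.1 ≠ vi := fun h => by
          have : (p.1 : ℕ) < (p.2 : ℕ) := hlt
          subst h; omega
        exact ⟨(addStar_adj_of_ne hxv hyv).mp ha, hlt, h2⟩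
      · rintro ⟨ha, hlt, h2⟩
        exact ⟨⟨le_addStar ha, hlt, by omega⟩, h2⟩
    rw [this]
  · rw [Finset.filter_filter]
    have : (Finset.univ.filter fun p : Fin n × Fin n =>
        ((addStar G vi N).Adj p.1 p.2 ∧ p.1 < p.2 ∧ (p.2 : ℕ) < i + 1) ∧ ¬ (p.2 : ℕ) < i)
        = N.image (fun z => (z, vi)) := by
      ext p
      simp only [Finset.mem_filter, Finset.mem_univ, true_and, Finset.mem_image]
      constructor
      · rintro ⟨⟨ha, hlt, h1⟩, h2⟩
        have hp2 : p.2 = vi := by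
          apply Fin.ext; omega
        subst hp2
        have : p.1 ∈ N := (addStar_adj_v' hGv hvN).mp ha
        exact ⟨p.1, this, rfl⟩
      · rintro ⟨z, hz, rfl⟩
        have hzi := hN _ hz
        refine ⟨⟨(addStar_adj_v' hGv hvN).mpr hz, ?_, ?_⟩, ?_⟩
        · show (z : ℕ) < (vi : ℕ); omega
        · show (vi : ℕ) < i + 1; omega
        · show ¬ ((vi : ℕ) < i); omega
    rw [this, Finset.card_image_of_injective]
    intro a b hab
    exact (Prod.mk.injEq _ _ _ _).mp hab |>.1

end Uncover

section Stage
open SimpleGraph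

lemma isAcyclic_of_le {V : Type*} {G H : SimpleGraph V} (h : H ≤ G) (hG : G.IsAcyclic) :
    H.IsAcyclic := fun _ c hc =>
  hG (c.transfer G fun _ he => SimpleGraph.edgeSet_mono h (c.edges_subset_edgeSet he))
    (hc.transfer _)

variable {n : ℕ}

/-- The invariant satisfied by a rooted uncovered forest after `i` steps. -/
def stagePred (a : ℕ → ℕ) (i : ℕ) (G : SimpleGraph (Fin n)) (R : Finset (Fin n)) : Prop :=
  (∀ x y : Fin n, G.Adj x y → (x : ℕ) < i ∧ (y : ℕ) < i) ∧
  G.IsAcyclic ∧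
  (∀ j, 1 ≤ j → j ≤ i → uncoverEdges G j = a j) ∧
  (∀ r ∈ R, (r : ℕ) < i) ∧
  (∀ x : Fin n, (x : ℕ) < i → ∃! r, r ∈ R ∧ G.Reachable x r) ∧
  R.card + a i = i

noncomputable def stageSet (n : ℕ) (a : ℕ → ℕ) (i : ℕ) :
    Finset (SimpleGraph (Fin n) × Finset (Fin n)) :=
  Finset.univ.filter fun GR => stagePred a i GR.1 GR.2

lemma mem_stageSet_iff {a : ℕ → ℕ} {i : ℕ} {GR : SimpleGraph (Fin n) × Finset (Fin n)} :
    GR ∈ stageSet n a i ↔ stagePred a i GR.1 GR.2 := by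
  simp [stageSet]

lemma stageSet_one (hn : 1 ≤ n) {a : ℕ → ℕ} (ha1 : a 1 = 0) :
    stageSet n a 1 = {((⊥ : SimpleGraph (Fin n)), ({⟨0, hn⟩} : Finset (Fin n)))} := by
  have hz : ((⟨0, hn⟩ : Fin n) : ℕ) = 0 := rfl
  ext ⟨G, R⟩
  rw [mem_stageSet_iff, Finset.mem_singleton]
  constructor
  · rintro ⟨hedge, -, -, hRlt, hroot, hcard⟩
    have hG : G = ⊥ := by
      ext x y
      simp only [SimpleGraph.bot_adj, iff_false]
      intro h
      obtain ⟨hx, hy⟩ := hedge x y h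
      exact G.ne_of_adj h (Fin.ext (by omega))
    have hR : R = {⟨0, hn⟩} := by
      obtain ⟨r, ⟨hrR, -⟩, -⟩ := hroot ⟨0, hn⟩ (by omega)
      have h1 : ∀ s ∈ R, s = (⟨0, hn⟩ : Fin n) := by
        intro s hs
        have := hRlt s hs
        exact Fin.ext (by omega)
      apply Finset.eq_singleton_iff_unique_mem.mpr
      exact ⟨(h1 r hrR) ▸ hrR, h1⟩
    rw [hG, hR, Prod.mk.injEq]; exact ⟨rfl, rfl⟩
  · rintro h
    rw [Prod.mk.injEq] at h
    obtain ⟨rfl, rfl⟩ := h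
    refine ⟨by simp, SimpleGraph.isAcyclic_bot, ?_, ?_, ?_, ?_⟩
    · intro j h1 h2
      have : j = 1 := by omega
      subst this
      rw [ha1]
      unfold uncoverEdges
      rw [Finset.card_eq_zero, Finset.eq_empty_iff_forall_notMem]
      intro p hp
      simp only [Finset.mem_filter] at hp
      exact hp.2.1
    · intro r hr
      rw [Finset.mem_singleton] at hr
      subst hr
      omega
    · intro x hx
      have hx0 : x = ⟨0, hn⟩ := Fin.ext (by omega)
      subst hx0
      refine ⟨⟨0, hn⟩, ⟨Finset.mem_singleton_self _, SimpleGraph.Reachable.refl _⟩, ?_⟩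
      rintro y ⟨hy, -⟩
      exact Finset.mem_singleton.mp hy
    · simp [ha1]

lemma card_stageSet_one (hn : 1 ≤ n) {a : ℕ → ℕ} (ha1 : a 1 = 0) :
    (stageSet n a 1).card = 1 := by
  rw [stageSet_one hn ha1, Finset.card_singleton]

lemma card_filter_val_lt {i : ℕ} (h : i ≤ n) :
    (Finset.univ.filter fun v : Fin n => (v : ℕ) < i).card = i := by
  have h2 : (Finset.univ.filter fun v : Fin n => (v : ℕ) < i).card = (Finset.range i).card := by
    refine Finset.card_bij (fun v _ => (v : ℕ)) ?_ ?_ ?_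
    · intro v hv
      simp only [Finset.mem_filter] at hv
      exact Finset.mem_range.mpr hv.2
    · intro v hv w hw hvw
      exact Fin.ext hvw
    · intro k hk
      rw [Finset.mem_range] at hk
      exact ⟨⟨k, by omega⟩, by simp [hk], rfl⟩
  rw [h2, Finset.card_range]

end Stage

section Decomp
open SimpleGraph

variable {n : ℕ}

lemma restrictBelow_le {T : SimpleGraph (Fin n)} {i : ℕ} : restrictBelow T i ≤ T := by
  rintro x y ⟨h, -, -⟩; exact h

lemma addStar_decomp {T : SimpleGraph (Fin n)} {i : ℕ} {vi : Fin n} (hvi : (vi : ℕ) = i)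
    (hT : ∀ x y : Fin n, T.Adj x y → (x : ℕ) < i + 1 ∧ (y : ℕ) < i + 1) :
    addStar (restrictBelow T i) vi (Finset.univ.filter fun z => T.Adj vi z) = T := by
  ext x y
  constructor
  · rintro ⟨hne, ⟨h, -, -⟩ | ⟨rfl, hy⟩ | ⟨rfl, hx⟩⟩
    · exact h
    · exact (Finset.mem_filter.mp hy).2
    · exact ((Finset.mem_filter.mp hx).2).symm
  · intro h
    refine ⟨T.ne_of_adj h, ?_⟩
    obtain ⟨hx, hy⟩ := hT x y h
    by_cases hxv : x = vi
    · subst hxv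
      exact Or.inr (Or.inl ⟨rfl, Finset.mem_filter.mpr ⟨Finset.mem_univ _, h⟩⟩)
    by_cases hyv : y = vi
    · subst hyv
      exact Or.inr (Or.inr ⟨rfl, Finset.mem_filter.mpr ⟨Finset.mem_univ _, h.symm⟩⟩)
    have hx' : (x : ℕ) < i := by
      have : (x : ℕ) ≠ i := fun hh => hxv (Fin.ext (by omega))
      omega
    have hy' : (y : ℕ) < i := by
      have : (y : ℕ) ≠ i := fun hh => hyv (Fin.ext (by omega))
      omega
    exact Or.inl ⟨h, hx', hy'⟩

lemma restrictBelow_addStar {G : SimpleGraph (Fin n)} {vi : Fin n} {N : Finset (Fin n)}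
    {i : ℕ} (hvi : (vi : ℕ) = i)
    (hG : ∀ x y : Fin n, G.Adj x y → (x : ℕ) < i ∧ (y : ℕ) < i)
    (hN : ∀ z ∈ N, (z : ℕ) < i) :
    restrictBelow (addStar G vi N) i = G := by
  ext x y
  constructor
  · rintro ⟨h, hx, hy⟩
    have hxv : x ≠ vi := fun hh => by subst hh; omega
    have hyv : y ≠ vi := fun hh => by subst hh; omega
    exact (addStar_adj_of_ne hxv hyv).mp h
  · intro h
    obtain ⟨hx, hy⟩ := hG x y h
    exact ⟨le_addStar h, hx, hy⟩

lemma filter_adj_addStar {G : SimpleGraph (Fin n)} {vi : Fin n} {N : Finset (Fin n)}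
    (hGv : ∀ y, ¬ G.Adj vi y) (hvN : vi ∉ N) :
    (Finset.univ.filter fun z => (addStar G vi N).Adj vi z) = N := by
  ext z
  rw [Finset.mem_filter]
  rw [addStar_adj_v hGv hvN]
  simp

end Decomp

section ClaimC
open SimpleGraph

variable {n : ℕ}

lemma card_treeSeq_eq_stage (hn : 2 ≤ n) (a : ℕ → ℕ) (han : a n = n - 1)
    (hseqn : a (n - 1) ≤ n - 2) :
    ((treeSet n).filter fun T => ∀ i, 1 ≤ i → i ≤ n → uncoverEdges T i = a i).card
      = (stageSet n a (n - 1)).card := by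
  classical
  obtain ⟨vl, hvl⟩ : ∃ vl : Fin n, (vl : ℕ) = n - 1 := ⟨⟨n - 1, by omega⟩, rfl⟩
  apply Finset.card_bij'
    (i := fun T _ => (restrictBelow T (n - 1), Finset.univ.filter fun z => T.Adj vl z))
    (j := fun GR _ => addStar GR.1 vl GR.2)
  -- forward membership
  · intro T hT
    simp only [Finset.mem_filter] at hT
    obtain ⟨hT1, hseq⟩ := hT
    rw [treeSet, Finset.mem_filter] at hT1
    have htree : T.IsTree := hT1.2
    set G := restrictBelow T (n - 1) with hGdef
    set R := Finset.univ.filter fun z => T.Adj vl z with hRdef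
    have hGedge : ∀ x y : Fin n, G.Adj x y → (x : ℕ) < n - 1 ∧ (y : ℕ) < n - 1 := by
      rintro x y ⟨-, hx, hy⟩; exact ⟨hx, hy⟩
    have hGv : ∀ y, ¬ G.Adj vl y := fun y h => by
      have := (hGedge _ _ h).1; rw [hvl] at this; omega
    have hvN : vl ∉ R := fun h => T.loopless.irrefl vl (Finset.mem_filter.mp h).2
    have hdecomp : addStar G vl R = T :=
      addStar_decomp hvl (fun x y _ => ⟨by omega, by omega⟩)
    have hac' : (addStar G vl R).IsAcyclic := by rw [hdecomp]; exact htree.IsAcyclic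
    rw [mem_stageSet_iff]
    refine ⟨hGedge, isAcyclic_of_le restrictBelow_le htree.IsAcyclic, ?_, ?_, ?_, ?_⟩
    · intro j h1 h2
      rw [uncoverEdges_restrictBelow h2]
      exact hseq j h1 (by omega)
    · intro r hr
      have : T.Adj vl r := (Finset.mem_filter.mp hr).2
      have hne : r ≠ vl := fun h => T.loopless.irrefl vl (h ▸ this)
      have : (r : ℕ) ≠ n - 1 := fun h => hne (Fin.ext (by rw [hvl]; omega))
      omega
    · intro x hx
      have hxvl : x ≠ vl := fun h => by rw [h, hvl] at hx; omega
      have hreach : (addStar G vl R).Reachable x vl := by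
        rw [hdecomp]
        exact htree.isConnected.preconnected x vl
      obtain ⟨z, hz, hrz⟩ := exists_attach_of_reachable' hGv hreach hxvl
      refine ⟨z, ⟨hz, hrz⟩, ?_⟩
      rintro y ⟨hy, hry⟩
      exact sep_of_addStar_acyclic hGv hvN hac' hy hz (hry.symm.trans hrz)
    · have hsplit := uncoverEdges_addStar_succ hvl hGedge
        (fun z hz => by
          have : T.Adj vl z := (Finset.mem_filter.mp hz).2
          have hne : z ≠ vl := fun h => T.loopless.irrefl vl (h ▸ this)
          have : (z : ℕ) ≠ n - 1 := fun h => hne (Fin.ext (by rw [hvl]; omega))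
          omega)
        (N := R)
      rw [hdecomp] at hsplit
      have h1 : n - 1 + 1 = n := by omega
      rw [h1] at hsplit
      have h2 := hseq n (by omega) le_rfl
      have h3 : uncoverEdges G (n - 1) = a (n - 1) := by
        rw [hGdef, uncoverEdges_restrictBelow le_rfl]
        exact hseq (n - 1) (by omega) (by omega)
      show R.card + a (n - 1) = n - 1
      omega
  -- backward membership
  · intro GR hGR
    rw [mem_stageSet_iff] at hGR
    obtain ⟨hedge, hac, hseq, hRlt, hroot, hcard⟩ := hGR
    obtain ⟨G, R⟩ := GR
    dsimp only at *
    have hGv : ∀ y, ¬ G.Adj vl y := fun y h => by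
      have := (hedge _ _ h).1; rw [hvl] at this; omega
    have hvN : vl ∉ R := fun h => by have := hRlt _ h; rw [hvl] at this; omega
    have hsep : ∀ z1 ∈ R, ∀ z2 ∈ R, G.Reachable z1 z2 → z1 = z2 := by
      intro z1 h1 z2 h2 hr
      obtain ⟨r, -, hu⟩ := hroot z1 (hRlt _ h1)
      exact (hu z1 ⟨h1, Reachable.refl _⟩).trans (hu z2 ⟨h2, hr⟩).symm
    have hacT : (addStar G vl R).IsAcyclic := acyclic_addStar hGv hvN hsep hac
    have hconnT : (addStar G vl R).Connected := by
      rw [connected_iff]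
      refine ⟨?_, ⟨vl⟩⟩
      have hall : ∀ x : Fin n, (addStar G vl R).Reachable x vl := by
        intro x
        by_cases hx : x = vl
        · rw [hx]
        · have hxlt : (x : ℕ) < n - 1 := by
            have : (x : ℕ) ≠ n - 1 := fun h => hx (Fin.ext (by rw [hvl]; omega))
            omega
          obtain ⟨r, ⟨hrR, hrreach⟩, -⟩ := hroot x hxlt
          have h1 : (addStar G vl R).Reachable x r := hrreach.mono le_addStar
          have h2 : (addStar G vl R).Adj r vl := (addStar_adj_v' hGv hvN).mpr hrR
          exact h1.trans h2.reachable
      intro u w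
      exact (hall u).trans (hall w).symm
    simp only [Finset.mem_filter]
    constructor
    · rw [treeSet, Finset.mem_filter]
      exact ⟨Finset.mem_univ _, ⟨hconnT, hacT⟩⟩
    · intro j h1 h2
      by_cases hj : j ≤ n - 1
      · rw [uncoverEdges_addStar_le hvl hj]
        exact hseq j h1 hj
      · have hj' : j = n := by omega
        rw [hj']
        have hsplit := uncoverEdges_addStar_succ hvl hedge (fun z hz => by
          have := hRlt _ hz; omega) (N := R)
        have h1' : n - 1 + 1 = n := by omega
        rw [h1'] at hsplit
        rw [hsplit, hseq (n - 1) (by omega) (by omega), han]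
        omega
  -- left inverse
  · intro T hT
    simp only [Finset.mem_filter] at hT
    obtain ⟨hT1, -⟩ := hT
    rw [treeSet, Finset.mem_filter] at hT1
    exact addStar_decomp hvl (fun x y _ => ⟨by omega, by omega⟩)
  -- right inverse
  · intro GR hGR
    rw [mem_stageSet_iff] at hGR
    obtain ⟨hedge, -, -, hRlt, -, -⟩ := hGR
    have hGv : ∀ y, ¬ GR.1.Adj vl y := fun y h => by
      have := (hedge _ _ h).1; rw [hvl] at this; omega
    have hvN : vl ∉ GR.2 := fun h => by have := hRlt _ h; rw [hvl] at this; omega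
    rw [Prod.ext_iff]
    constructor
    · exact restrictBelow_addStar hvl hedge (fun z hz => hRlt _ hz)
    · exact filter_adj_addStar hGv hvN

end ClaimC

section Counting
open SimpleGraph

lemma chooseZ_coe (m k : ℕ) : chooseZ m (k : ℤ) = m.choose k := by
  simp [chooseZ]

lemma chooseZ_neg (m : ℕ) {j : ℤ} (h : j < 0) : chooseZ m j = 0 := by
  simp [chooseZ, not_le.mpr h]

variable {n : ℕ}

noncomputable def setA (n : ℕ) (a : ℕ → ℕ) (i : ℕ) :
    Finset ((SimpleGraph (Fin n) × Finset (Fin n)) × Finset (Fin n)) :=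
  Finset.univ.filter fun p =>
    p.1 ∈ stageSet n a i ∧ p.2 ⊆ p.1.2 ∧ p.2.card = a (i + 1) - a i

noncomputable def setB (n : ℕ) (a : ℕ → ℕ) (i : ℕ) :
    Finset ((SimpleGraph (Fin n) × Finset (Fin n)) × (Fin n × Finset (Fin n))) :=
  Finset.univ.filter fun p =>
    p.1 ∈ stageSet n a i ∧ (p.2.1 : ℕ) < i ∧ p.2.2 ⊆ p.1.2 ∧
      p.2.2.card + 1 = a (i + 1) - a i ∧ ∀ r ∈ p.2.2, ¬ p.1.1.Reachable p.2.1 r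

lemma mem_setA_iff {a : ℕ → ℕ} {i : ℕ}
    {p : (SimpleGraph (Fin n) × Finset (Fin n)) × Finset (Fin n)} :
    p ∈ setA n a i ↔
      p.1 ∈ stageSet n a i ∧ p.2 ⊆ p.1.2 ∧ p.2.card = a (i + 1) - a i := by
  simp [setA]

lemma mem_setB_iff {a : ℕ → ℕ} {i : ℕ}
    {p : (SimpleGraph (Fin n) × Finset (Fin n)) × (Fin n × Finset (Fin n))} :
    p ∈ setB n a i ↔
      p.1 ∈ stageSet n a i ∧ (p.2.1 : ℕ) < i ∧ p.2.2 ⊆ p.1.2 ∧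
      p.2.2.card + 1 = a (i + 1) - a i ∧ ∀ r ∈ p.2.2, ¬ p.1.1.Reachable p.2.1 r := by
  simp [setB]

lemma card_setA {a : ℕ → ℕ} {i : ℕ} :
    (setA n a i).card = (stageSet n a i).card * Nat.choose (i - a i) (a (i + 1) - a i) := by
  classical
  rw [Finset.card_eq_sum_card_fiberwise (f := Prod.fst) (t := stageSet n a i)
    (fun p hp => (mem_setA_iff.mp hp).1)]
  rw [Finset.sum_congr rfl (fun GR hGR => ?_), Finset.sum_const, smul_eq_mul]
  have hcard : GR.2.card = i - a i := by
    have := (mem_stageSet_iff.mp hGR).2.2.2.2.2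
    omega
  rw [← hcard, ← Finset.card_powersetCard]
  refine Finset.card_bij' (fun p _ => p.2) (fun P _ => (GR, P)) ?_ ?_ ?_ ?_
  · intro p hp
    obtain ⟨hp1, hp2⟩ := Finset.mem_filter.mp hp
    rw [mem_setA_iff] at hp1
    rw [Finset.mem_powersetCard]
    exact ⟨hp2 ▸ hp1.2.1, hp1.2.2⟩
  · intro P hP
    rw [Finset.mem_powersetCard] at hP
    exact Finset.mem_filter.mpr ⟨mem_setA_iff.mpr ⟨hGR, hP.1, hP.2⟩, rfl⟩
  · intro p hp
    have h1 := (Finset.mem_filter.mp hp).2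
    show (GR, p.2) = p
    rw [← h1]
  · intro P hP
    rfl

lemma card_setB {a : ℕ → ℕ} {i : ℕ} (hin : i ≤ n) (hai : a i ≤ a (i + 1))
    (hai1 : a i + 1 ≤ i) :
    (setB n a i).card = (stageSet n a i).card *
      (i * chooseZ (i - a i - 1) ((a (i + 1) : ℤ) - a i - 1)) := by
  classical
  by_cases hd : a (i + 1) - a i = 0
  · have hz : ((a (i + 1) : ℤ) - a i - 1) < 0 := by
      have : a (i + 1) ≤ a i := by omega
      push_cast; omega
    rw [chooseZ_neg _ hz]
    have : setB n a i = ∅ := by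
      rw [Finset.eq_empty_iff_forall_notMem]
      intro p hp
      have := (mem_setB_iff.mp hp).2.2.2.1
      omega
    rw [this]
    simp
  -- d ≥ 1
  have hd1 : 1 ≤ a (i + 1) - a i := by omega
  have hcz : chooseZ (i - a i - 1) ((a (i + 1) : ℤ) - a i - 1)
      = Nat.choose (i - a i - 1) (a (i + 1) - a i - 1) := by
    have : ((a (i + 1) : ℤ) - a i - 1) = ((a (i + 1) - a i - 1 : ℕ) : ℤ) := by
      push_cast [Nat.sub_sub]; omega
    rw [this, chooseZ_coe]
  rw [hcz]
  rw [Finset.card_eq_sum_card_fiberwise (f := Prod.fst) (t := stageSet n a i)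
    (fun p hp => (mem_setB_iff.mp hp).1)]
  rw [Finset.sum_congr rfl (fun GR hGR => ?_), Finset.sum_const, smul_eq_mul]
  -- fiber over GR
  rw [Finset.card_eq_sum_card_fiberwise (f := fun p => p.2.1)
    (t := Finset.univ.filter fun v : Fin n => (v : ℕ) < i)
    (fun p hp => by
      simp only [Finset.mem_coe, Finset.mem_filter] at hp ⊢
      exact ⟨Finset.mem_univ _, (mem_setB_iff.mp hp.1).2.1⟩)]
  rw [Finset.sum_congr rfl (fun x hx => ?_), Finset.sum_const, smul_eq_mul,
    card_filter_val_lt hin]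
  -- fiber over (GR, x)
  obtain ⟨hpred⟩ : ∃ _ : stagePred a i GR.1 GR.2, True := ⟨mem_stageSet_iff.mp hGR, trivial⟩
  obtain ⟨hedge, hac, hseq, hRlt, hroot, hcard⟩ := hpred
  simp only [Finset.mem_filter, Finset.mem_univ, true_and] at hx
  obtain ⟨rx, hrx, hrxu⟩ := hroot x hx
  have hRcard : GR.2.card = i - a i := by omega
  have herase : (GR.2.erase rx).card = i - a i - 1 := by
    rw [Finset.card_erase_of_mem hrx.1, hRcard]
  rw [← herase, ← Finset.card_powersetCard]
  refine Finset.card_bij' (fun p _ => p.2.2) (fun P _ => (GR, (x, P))) ?_ ?_ ?_ ?_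
  · intro p hp
    have hpx := (Finset.mem_filter.mp hp).2
    have hp' := Finset.mem_filter.mp (Finset.mem_filter.mp hp).1
    have hpfst := hp'.2
    obtain ⟨-, -, hsub, hcardP, hnreach⟩ := mem_setB_iff.mp hp'.1
    rw [Finset.mem_powersetCard]
    constructor
    · intro r hr
      rw [Finset.mem_erase]
      refine ⟨?_, hpfst ▸ hsub hr⟩
      intro hrrx
      apply hnreach r hr
      rw [hpfst, hpx, hrrx]
      exact hrx.2
    · show p.2.2.card = a (i + 1) - a i - 1
      omega
  · intro P hP
    rw [Finset.mem_powersetCard] at hP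
    obtain ⟨hsub, hcardP⟩ := hP
    refine Finset.mem_filter.mpr ⟨Finset.mem_filter.mpr ⟨mem_setB_iff.mpr
      ⟨hGR, hx, fun r hr => (Finset.mem_erase.mp (hsub hr)).2,
      by show P.card + 1 = a (i + 1) - a i; omega, ?_⟩, rfl⟩, rfl⟩
    intro r hr hre
    have hrR : r ∈ GR.2 := (Finset.mem_erase.mp (hsub hr)).2
    have : r = rx := hrxu r ⟨hrR, hre⟩
    exact (Finset.mem_erase.mp (hsub hr)).1 this
  · intro p hp
    have h2 := (Finset.mem_filter.mp hp).2
    have h1 := (Finset.mem_filter.mp (Finset.mem_filter.mp hp).1).2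
    show (GR, x, p.2.2) = p
    rw [← h1, ← h2]
  · intro P hP
    rfl

end Counting

section BijCommon
open SimpleGraph

variable {n : ℕ} {a : ℕ → ℕ} {i : ℕ} {vi : Fin n}

lemma addStar_edge_bound (hvi : (vi : ℕ) = i) {G : SimpleGraph (Fin n)} {N : Finset (Fin n)}
    (hedge : ∀ x y : Fin n, G.Adj x y → (x : ℕ) < i ∧ (y : ℕ) < i)
    (hNlt : ∀ z ∈ N, (z : ℕ) < i) :
    ∀ x y : Fin n, (addStar G vi N).Adj x y → (x : ℕ) < i + 1 ∧ (y : ℕ) < i + 1 := by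
  rintro x y ⟨hne, h | ⟨rfl, hy⟩ | ⟨rfl, hx⟩⟩
  · obtain ⟨h1, h2⟩ := hedge x y h
    omega
  · have := hNlt _ hy
    omega
  · have := hNlt _ hx
    omega

/-- forward: the non-root part of the stage invariant for `addStar`. -/
lemma stagePred_addStar_partial (hvi : (vi : ℕ) = i) (h1i : 1 ≤ i)
    {G : SimpleGraph (Fin n)} {R N : Finset (Fin n)}
    (hpred : stagePred a i G R) (hNlt : ∀ z ∈ N, (z : ℕ) < i)
    (hNcard : N.card + a i = a (i + 1))
    (hNsep : ∀ z1 ∈ N, ∀ z2 ∈ N, G.Reachable z1 z2 → z1 = z2) :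
    (addStar G vi N).IsAcyclic ∧
    (∀ j, 1 ≤ j → j ≤ i + 1 → uncoverEdges (addStar G vi N) j = a j) := by
  obtain ⟨hedge, hac, hseq, hRlt, hroot, hcard⟩ := hpred
  have hGv : ∀ y, ¬ G.Adj vi y := fun y h => by have := (hedge _ _ h).1; omega
  have hvN : vi ∉ N := fun h => by have := hNlt _ h; omega
  constructor
  · exact acyclic_addStar hGv hvN hNsep hac
  · intro j hj1 hj2
    by_cases hj : j ≤ i
    · rw [uncoverEdges_addStar_le hvi hj]
      exact hseq j hj1 hj
    · have : j = i + 1 := by omega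
      rw [this, uncoverEdges_addStar_succ hvi hedge hNlt, hseq i h1i le_rfl]
      omega

/-- backward: the data extracted from a stage-(i+1) pair. -/
lemma stage_succ_extract (hvi : (vi : ℕ) = i) (h1i : 1 ≤ i)
    {G' : SimpleGraph (Fin n)} {R' : Finset (Fin n)}
    (hpred : stagePred a (i + 1) G' R') :
    (addStar (restrictBelow G' i) vi (Finset.univ.filter fun z => G'.Adj vi z) = G') ∧
    (∀ z ∈ (Finset.univ.filter fun z => G'.Adj vi z), (z : ℕ) < i) ∧
    ((Finset.univ.filter fun z => G'.Adj vi z).card + a i = a (i + 1)) ∧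
    (∀ z1 ∈ (Finset.univ.filter fun z => G'.Adj vi z),
      ∀ z2 ∈ (Finset.univ.filter fun z => G'.Adj vi z),
        (restrictBelow G' i).Reachable z1 z2 → z1 = z2) ∧
    (∀ x y : Fin n, (restrictBelow G' i).Adj x y → (x : ℕ) < i ∧ (y : ℕ) < i) ∧
    (restrictBelow G' i).IsAcyclic ∧
    (∀ j, 1 ≤ j → j ≤ i → uncoverEdges (restrictBelow G' i) j = a j) := by
  obtain ⟨hedge, hac, hseq, hRlt, hroot, hcard⟩ := hpred
  set G := restrictBelow G' i with hGdef
  set N := Finset.univ.filter fun z => G'.Adj vi z with hNdef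
  have hNlt : ∀ z ∈ N, (z : ℕ) < i := by
    intro z hz
    have hadj : G'.Adj vi z := (Finset.mem_filter.mp hz).2
    obtain ⟨-, h2⟩ := hedge _ _ hadj
    have : z ≠ vi := fun h => G'.loopless.irrefl vi (h ▸ hadj)
    have : (z : ℕ) ≠ i := fun h => this (Fin.ext (by omega))
    omega
  have hGedge : ∀ x y : Fin n, G.Adj x y → (x : ℕ) < i ∧ (y : ℕ) < i := by
    rintro x y ⟨-, h1, h2⟩; exact ⟨h1, h2⟩
  have hGv : ∀ y, ¬ G.Adj vi y := fun y h => by have := (hGedge _ _ h).1; omega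
  have hvN : vi ∉ N := fun h => by have := hNlt _ h; omega
  have hdecomp : addStar G vi N = G' := addStar_decomp hvi hedge
  have hacG : G.IsAcyclic := isAcyclic_of_le restrictBelow_le hac
  have hsepN : ∀ z1 ∈ N, ∀ z2 ∈ N, G.Reachable z1 z2 → z1 = z2 := by
    intro z1 h1 z2 h2 hr
    exact sep_of_addStar_acyclic hGv hvN (hdecomp ▸ hac) h1 h2 hr
  have hseqG : ∀ j, 1 ≤ j → j ≤ i → uncoverEdges G j = a j := by
    intro j h1 h2
    rw [hGdef, uncoverEdges_restrictBelow h2]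
    exact hseq j h1 (by omega)
  have hNcard : N.card + a i = a (i + 1) := by
    have hsplit := uncoverEdges_addStar_succ hvi hGedge hNlt (N := N)
    rw [hdecomp] at hsplit
    have e1 := hseq (i + 1) (by omega) le_rfl
    have e2 := hseqG i h1i le_rfl
    omega
  exact ⟨hdecomp, hNlt, hNcard, hsepN, hGedge, hacG, hseqG⟩

end BijCommon

section BijA
open SimpleGraph

variable {n : ℕ} {a : ℕ → ℕ} {i : ℕ} {vi : Fin n}

/-- Roots for case A: after attaching `vi` to the roots in `P`, the new root set is
`insert vi (R \ P)`. -/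
lemma rootsA (hvi : (vi : ℕ) = i) {G : SimpleGraph (Fin n)} {R P : Finset (Fin n)}
    (hedge : ∀ x y : Fin n, G.Adj x y → (x : ℕ) < i ∧ (y : ℕ) < i)
    (hRlt : ∀ r ∈ R, (r : ℕ) < i)
    (hroot : ∀ x : Fin n, (x : ℕ) < i → ∃! r, r ∈ R ∧ G.Reachable x r)
    (hPR : P ⊆ R) :
    ∀ x : Fin n, (x : ℕ) < i + 1 →
      ∃! r, r ∈ insert vi (R \ P) ∧ (addStar G vi P).Reachable x r := by
  have hGv : ∀ y, ¬ G.Adj vi y := fun y h => by have := (hedge _ _ h).1; omega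
  have hvP : vi ∉ P := fun h => by have := hRlt _ (hPR h); omega
  intro x hx
  by_cases hxv : (addStar G vi P).Reachable x vi
  · refine ⟨vi, ⟨Finset.mem_insert_self _ _, hxv⟩, ?_⟩
    rintro y ⟨hy, hry⟩
    rcases Finset.mem_insert.mp hy with h | h
    · exact h
    · exfalso
      obtain ⟨hyR, hyP⟩ := Finset.mem_sdiff.mp h
      have hyvi : y ≠ vi := fun hh => by have := hRlt _ hyR; subst hh; omega
      have hreach : (addStar G vi P).Reachable y vi := hry.symm.trans hxv
      obtain ⟨z, hzP, hzy⟩ := exists_attach_of_reachable' hGv hreach hyvi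
      obtain ⟨r, -, hru⟩ := hroot z (hRlt _ (hPR hzP))
      have h1 : y = r := hru y ⟨hyR, hzy.symm⟩
      have h2 : z = r := hru z ⟨hPR hzP, Reachable.refl _⟩
      rw [h1, ← h2] at hyP
      exact hyP hzP
  · have hxvi : x ≠ vi := fun h => hxv (h ▸ Reachable.refl _)
    have hxi : (x : ℕ) < i := by
      have : (x : ℕ) ≠ i := fun h => hxvi (Fin.ext (by omega))
      omega
    obtain ⟨r, ⟨hrR, hrreach⟩, hru⟩ := hroot x hxi
    have hrP : r ∉ P := by
      intro hrP
      apply hxv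
      exact (hrreach.mono le_addStar).trans ((addStar_adj_v' hGv hvP).mpr hrP).reachable
    refine ⟨r, ⟨Finset.mem_insert_of_mem (Finset.mem_sdiff.mpr ⟨hrR, hrP⟩),
      hrreach.mono le_addStar⟩, ?_⟩
    rintro y ⟨hy, hry⟩
    rcases Finset.mem_insert.mp hy with h | h
    · exact absurd (h ▸ hry) hxv
    · exact hru y ⟨(Finset.mem_sdiff.mp h).1, (reachable_addStar_iff hxv).mp hry⟩

lemma forwardA (hvi : (vi : ℕ) = i) (h1i : 1 ≤ i) (hai : a i ≤ a (i + 1))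
    (hai2 : a (i + 1) ≤ i)
    {G : SimpleGraph (Fin n)} {R P : Finset (Fin n)}
    (hpred : stagePred a i G R) (hPR : P ⊆ R) (hPcard : P.card = a (i + 1) - a i) :
    stagePred a (i + 1) (addStar G vi P) (insert vi (R \ P)) := by
  obtain ⟨hedge, hac, hseq, hRlt, hroot, hcard⟩ := hpred
  have hPlt : ∀ z ∈ P, (z : ℕ) < i := fun z hz => hRlt _ (hPR hz)
  have hPsep : ∀ z1 ∈ P, ∀ z2 ∈ P, G.Reachable z1 z2 → z1 = z2 := by
    intro z1 h1 z2 h2 hr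
    obtain ⟨r, -, hru⟩ := hroot z1 (hPlt _ h1)
    exact (hru z1 ⟨hPR h1, Reachable.refl _⟩).trans (hru z2 ⟨hPR h2, hr⟩).symm
  obtain ⟨hac', hseq'⟩ := stagePred_addStar_partial hvi h1i
    ⟨hedge, hac, hseq, hRlt, hroot, hcard⟩ hPlt (by omega) hPsep
  have hvRP : vi ∉ R \ P := fun h => by
    have := hRlt _ (Finset.mem_sdiff.mp h).1; omega
  refine ⟨addStar_edge_bound hvi hedge hPlt, hac', hseq', ?_, ?_, ?_⟩
  · intro r hr
    rcases Finset.mem_insert.mp hr with h | h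
    · subst h; omega
    · have := hRlt _ (Finset.mem_sdiff.mp h).1; omega
  · exact rootsA hvi hedge hRlt hroot hPR
  · rw [Finset.card_insert_of_notMem hvRP, Finset.card_sdiff_of_subset hPR]
    have hPcard' : P.card ≤ R.card := Finset.card_le_card hPR
    omega

lemma card_S1_eq_setA (hvi : (vi : ℕ) = i) (h1i : 1 ≤ i) (hai : a i ≤ a (i + 1))
    (hai2 : a (i + 1) ≤ i) :
    ((stageSet n a (i + 1)).filter fun GR => vi ∈ GR.2).card = (setA n a i).card := by
  classical
  refine Finset.card_bij'
    (fun GR' _ => ((restrictBelow GR'.1 i,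
        (GR'.2.erase vi) ∪ (Finset.univ.filter fun z => GR'.1.Adj vi z)),
        Finset.univ.filter fun z => GR'.1.Adj vi z))
    (fun p _ => (addStar p.1.1 vi p.2, insert vi (p.1.2 \ p.2))) ?_ ?_ ?_ ?_
  -- backward membership : S1 → A
  · intro GR' hGR'
    show ((restrictBelow GR'.1 i,
        (GR'.2.erase vi) ∪ (Finset.univ.filter fun z => GR'.1.Adj vi z)),
        Finset.univ.filter fun z => GR'.1.Adj vi z) ∈ setA n a i
    obtain ⟨hmem, hviR'⟩ := Finset.mem_filter.mp hGR'
    have hpred' := mem_stageSet_iff.mp hmem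
    obtain ⟨hdecomp, hNlt, hNcard, hsepN, hGedge, hacG, hseqG⟩ :=
      stage_succ_extract hvi h1i hpred'
    obtain ⟨hedge', hac', hseq', hRlt', hroot', hcard'⟩ := hpred'
    set G := restrictBelow GR'.1 i with hGdef
    set N := Finset.univ.filter fun z => GR'.1.Adj vi z with hNdef
    set R := (GR'.2.erase vi) ∪ N with hRdef
    have hGv : ∀ y, ¬ G.Adj vi y := fun y h => by have := (hGedge _ _ h).1; omega
    have hvN : vi ∉ N := fun h => by have := hNlt _ h; omega
    -- transported reachability facts
    have hreachA : ∀ x y : Fin n, (addStar G vi N).Reachable x y ↔ GR'.1.Reachable x y := by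
      intro x y; rw [hdecomp]
    have hdisj : ∀ z, z ∈ GR'.2.erase vi → z ∈ N → False := by
      intro z hz1 hz2
      obtain ⟨hzvi, hzR'⟩ := Finset.mem_erase.mp hz1
      have h1 : GR'.1.Reachable z vi :=
        ((addStar_adj_v' hGv hvN).mpr hz2).reachable.mono (le_of_eq hdecomp)
      obtain ⟨r, -, hru⟩ := hroot' z (by have := hNlt _ hz2; omega)
      exact hzvi ((hru z ⟨hzR', Reachable.refl _⟩).trans (hru vi ⟨hviR', h1⟩).symm)
    rw [mem_setA_iff]
    refine ⟨mem_stageSet_iff.mpr ⟨hGedge, hacG, hseqG, ?_, ?_, ?_⟩,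
      Finset.subset_union_right, by show N.card = a (i + 1) - a i; omega⟩
    · intro r hr
      rcases Finset.mem_union.mp hr with h | h
      · obtain ⟨h1, h2⟩ := Finset.mem_erase.mp h
        have := hRlt' _ h2
        have : (r : ℕ) ≠ i := fun hh => h1 (Fin.ext (by omega))
        omega
      · exact hNlt _ h
    · -- existsUnique roots in G
      intro x hx
      by_cases hxv : GR'.1.Reachable x vi
      · have hxvi : x ≠ vi := fun h => by subst h; omega
        obtain ⟨z, hzN, hzreach⟩ :=
          exists_attach_of_reachable' hGv ((hreachA x vi).mpr hxv) hxvi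
        refine ⟨z, ⟨Finset.mem_union_right _ hzN, hzreach⟩, ?_⟩
        rintro y ⟨hy, hry⟩
        rcases Finset.mem_union.mp hy with h | h
        · exfalso
          obtain ⟨hyvi, hyR'⟩ := Finset.mem_erase.mp h
          have h1 : GR'.1.Reachable x y := (hry.mono le_addStar).mono (le_of_eq hdecomp)
          obtain ⟨r, -, hru⟩ := hroot' x (by omega)
          exact hyvi ((hru y ⟨hyR', h1⟩).trans (hru vi ⟨hviR', hxv⟩).symm)
        · exact hsepN y h z hzN (hry.symm.trans hzreach)
      · have hxvi : x ≠ vi := fun h => hxv (h ▸ Reachable.refl _)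
        have hnr : ¬ (addStar G vi N).Reachable x vi := fun h => hxv ((hreachA x vi).mp h)
        obtain ⟨r', ⟨hr'R', hr'reach⟩, hr'u⟩ := hroot' x (by omega)
        have hr'vi : r' ≠ vi := fun h => hxv (h ▸ hr'reach)
        have hGreach : G.Reachable x r' :=
          (reachable_addStar_iff hnr).mp ((hreachA x r').mpr hr'reach)
        refine ⟨r', ⟨Finset.mem_union_left _ (Finset.mem_erase.mpr ⟨hr'vi, hr'R'⟩),
          hGreach⟩, ?_⟩
        rintro y ⟨hy, hry⟩
        rcases Finset.mem_union.mp hy with h | h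
        · exact hr'u y ⟨(Finset.mem_erase.mp h).2,
            (hreachA x y).mp (hry.mono le_addStar)⟩
        · exfalso
          apply hnr
          exact (hry.mono le_addStar).trans ((addStar_adj_v' hGv hvN).mpr h).reachable
    · -- cardinality
      have hdisj' : Disjoint (GR'.2.erase vi) N :=
        Finset.disjoint_left.mpr fun {z} hz1 hz2 => hdisj z hz1 hz2
      have h1 : R.card = (GR'.2.erase vi).card + N.card := Finset.card_union_of_disjoint hdisj'
      have h2 : (GR'.2.erase vi).card = GR'.2.card - 1 := Finset.card_erase_of_mem hviR'
      have h3 : 1 ≤ GR'.2.card := Finset.card_pos.mpr ⟨vi, hviR'⟩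
      show R.card + a i = i
      omega
  -- forward membership : A → S1
  · intro p hp
    obtain ⟨hmem, hsub, hcardP⟩ := mem_setA_iff.mp hp
    have hpred := mem_stageSet_iff.mp hmem
    refine Finset.mem_filter.mpr ⟨mem_stageSet_iff.mpr
      (forwardA hvi h1i hai hai2 hpred hsub hcardP), Finset.mem_insert_self _ _⟩
  -- left inverse : S1 → A → S1
  · intro GR' hGR'
    obtain ⟨hmem, hviR'⟩ := Finset.mem_filter.mp hGR'
    have hpred' := mem_stageSet_iff.mp hmem
    obtain ⟨hdecomp, hNlt, hNcard, hsepN, hGedge, hacG, hseqG⟩ :=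
      stage_succ_extract hvi h1i hpred'
    obtain ⟨hedge', hac', hseq', hRlt', hroot', hcard'⟩ := hpred'
    set G := restrictBelow GR'.1 i with hGdef
    set N := Finset.univ.filter fun z => GR'.1.Adj vi z with hNdef
    have hGv : ∀ y, ¬ G.Adj vi y := fun y h => by have := (hGedge _ _ h).1; omega
    have hvN : vi ∉ N := fun h => by have := hNlt _ h; omega
    have hdisj : ∀ z, z ∈ GR'.2.erase vi → z ∈ N → False := by
      intro z hz1 hz2
      obtain ⟨hzvi, hzR'⟩ := Finset.mem_erase.mp hz1
      have h1 : GR'.1.Reachable z vi :=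
        ((addStar_adj_v' hGv hvN).mpr hz2).reachable.mono (le_of_eq hdecomp)
      obtain ⟨r, -, hru⟩ := hroot' z (by have := hNlt _ hz2; omega)
      exact hzvi ((hru z ⟨hzR', Reachable.refl _⟩).trans (hru vi ⟨hviR', h1⟩).symm)
    have hsetid : ((GR'.2.erase vi ∪ N) \ N) = GR'.2.erase vi := by
      ext z
      simp only [Finset.mem_sdiff, Finset.mem_union]
      constructor
      · rintro ⟨h1 | h1, h2⟩
        · exact h1
        · exact absurd h1 h2
      · intro h
        exact ⟨Or.inl h, fun hc => hdisj z h hc⟩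
    show (addStar G vi N, insert vi ((GR'.2.erase vi ∪ N) \ N)) = GR'
    rw [hsetid, Finset.insert_erase hviR', hdecomp]
  -- right inverse : A → S1 → A
  · intro p hp
    obtain ⟨hmem, hsub, hcardP⟩ := mem_setA_iff.mp hp
    obtain ⟨hedge, hac, hseq, hRlt, hroot, hcard⟩ := mem_stageSet_iff.mp hmem
    have hPlt : ∀ z ∈ p.2, (z : ℕ) < i := fun z hz => hRlt _ (hsub hz)
    have hGv : ∀ y, ¬ p.1.1.Adj vi y := fun y h => by have := (hedge _ _ h).1; omega
    have hvP : vi ∉ p.2 := fun h => by have := hPlt _ h; omega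
    have hvRP : vi ∉ p.1.2 \ p.2 := fun h => by
      have := hRlt _ (Finset.mem_sdiff.mp h).1; omega
    have hg : restrictBelow (addStar p.1.1 vi p.2) i = p.1.1 :=
      restrictBelow_addStar hvi hedge hPlt
    have hfilter : (Finset.univ.filter fun z => (addStar p.1.1 vi p.2).Adj vi z) = p.2 :=
      filter_adj_addStar hGv hvP
    have hload : (insert vi (p.1.2 \ p.2)).erase vi = p.1.2 \ p.2 :=
      Finset.erase_insert hvRP
    show ((restrictBelow (addStar p.1.1 vi p.2) i,
      ((insert vi (p.1.2 \ p.2)).erase vi) ∪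
        (Finset.univ.filter fun z => (addStar p.1.1 vi p.2).Adj vi z)),
      Finset.univ.filter fun z => (addStar p.1.1 vi p.2).Adj vi z) = p
    rw [hg, hfilter, hload, Finset.sdiff_union_of_subset hsub]

end BijA

section BijB
open SimpleGraph

variable {n : ℕ} {a : ℕ → ℕ} {i : ℕ} {vi : Fin n}

/-- the unique `N`-vertex in the component (in `G`) of the root of `vi`. -/
noncomputable def x0of (i : ℕ) (vi : Fin n) (GR' : SimpleGraph (Fin n) × Finset (Fin n)) :
    Fin n :=
  if h : ∃! z, z ∈ (Finset.univ.filter fun w => GR'.1.Adj vi w) ∧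
      ∃ r ∈ GR'.2, (restrictBelow GR'.1 i).Reachable r z
  then h.choose else vi

lemma x0of_spec {GR' : SimpleGraph (Fin n) × Finset (Fin n)}
    (h : ∃! z, z ∈ (Finset.univ.filter fun w => GR'.1.Adj vi w) ∧
      ∃ r ∈ GR'.2, (restrictBelow GR'.1 i).Reachable r z) :
    ((x0of i vi GR') ∈ (Finset.univ.filter fun w => GR'.1.Adj vi w) ∧
      ∃ r ∈ GR'.2, (restrictBelow GR'.1 i).Reachable r (x0of i vi GR')) ∧
    (∀ z, (z ∈ (Finset.univ.filter fun w => GR'.1.Adj vi w) ∧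
      ∃ r ∈ GR'.2, (restrictBelow GR'.1 i).Reachable r z) → z = x0of i vi GR') := by
  unfold x0of
  rw [dif_pos h]
  exact ⟨h.choose_spec.1, fun z hz => h.choose_spec.2 z hz⟩

lemma exU_attach (hvi : (vi : ℕ) = i) (h1i : 1 ≤ i)
    {G' : SimpleGraph (Fin n)} {R' : Finset (Fin n)}
    (hpred : stagePred a (i + 1) G' R') (hviR' : vi ∉ R') :
    ∃! z, z ∈ (Finset.univ.filter fun w => G'.Adj vi w) ∧
      ∃ r ∈ R', (restrictBelow G' i).Reachable r z := by
  obtain ⟨hdecomp, hNlt, hNcard, hsepN, hGedge, hacG, hseqG⟩ :=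
    stage_succ_extract hvi h1i hpred
  obtain ⟨hedge', hac', hseq', hRlt', hroot', hcard'⟩ := hpred
  set G := restrictBelow G' i
  set N := Finset.univ.filter fun w => G'.Adj vi w
  have hGv : ∀ y, ¬ G.Adj vi y := fun y h => by have := (hGedge _ _ h).1; omega
  have hvN : vi ∉ N := fun h => by have := hNlt _ h; omega
  obtain ⟨r', ⟨hr'R', hr'reach⟩, hr'u⟩ := hroot' vi (by omega)
  have hr'vi : r' ≠ vi := fun h => hviR' (h ▸ hr'R')
  have hreach2 : (addStar G vi N).Reachable r' vi := by
    rw [hdecomp]; exact hr'reach.symm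
  obtain ⟨z, hzN, hzreach⟩ := exists_attach_of_reachable' hGv hreach2 hr'vi
  refine ⟨z, ⟨hzN, ⟨r', hr'R', hzreach⟩⟩, ?_⟩
  rintro y ⟨hyN, r, hrR', hry⟩
  -- r is reachable from vi in G', hence r = r'
  have h1 : G'.Reachable vi r := by
    have hadj : G'.Adj vi y := (Finset.mem_filter.mp hyN).2
    exact hadj.reachable.trans ((hry.mono restrictBelow_le).symm)
  have hrr' : r = r' := hr'u r ⟨hrR', h1⟩
  exact hsepN y hyN z hzN ((hry.symm.trans (hrr' ▸ hzreach)))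

/-- Roots for case B. -/
lemma rootsB (hvi : (vi : ℕ) = i) {G : SimpleGraph (Fin n)} {R P : Finset (Fin n)} {x₀ : Fin n}
    (hedge : ∀ x y : Fin n, G.Adj x y → (x : ℕ) < i ∧ (y : ℕ) < i)
    (hRlt : ∀ r ∈ R, (r : ℕ) < i)
    (hroot : ∀ x : Fin n, (x : ℕ) < i → ∃! r, r ∈ R ∧ G.Reachable x r)
    (hPR : P ⊆ R) (hx0lt : (x₀ : ℕ) < i)
    (hx0P : ∀ p ∈ P, ¬ G.Reachable x₀ p) :
    ∀ x : Fin n, (x : ℕ) < i + 1 →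
      ∃! r, r ∈ R \ P ∧ (addStar G vi (insert x₀ P)).Reachable x r := by
  have hGv : ∀ y, ¬ G.Adj vi y := fun y h => by have := (hedge _ _ h).1; omega
  have hNlt : ∀ z ∈ insert x₀ P, (z : ℕ) < i := by
    intro z hz
    rcases Finset.mem_insert.mp hz with rfl | h
    · exact hx0lt
    · exact hRlt _ (hPR h)
  have hvN : vi ∉ insert x₀ P := fun h => by have := hNlt _ h; omega
  obtain ⟨r₀, ⟨hr₀R, hr₀reach⟩, hr₀u⟩ := hroot x₀ hx0lt
  have hr₀P : r₀ ∉ P := fun h => hx0P r₀ h hr₀reach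
  intro x hx
  by_cases hxv : (addStar G vi (insert x₀ P)).Reachable x vi
  · have hvir₀ : (addStar G vi (insert x₀ P)).Reachable vi r₀ :=
      ((addStar_adj_v hGv hvN).mpr (Finset.mem_insert_self _ _)).reachable.trans
        (hr₀reach.mono le_addStar)
    refine ⟨r₀, ⟨Finset.mem_sdiff.mpr ⟨hr₀R, hr₀P⟩, hxv.trans hvir₀⟩, ?_⟩
    rintro y ⟨hy, hry⟩
    obtain ⟨hyR, hyP⟩ := Finset.mem_sdiff.mp hy
    have hyvi : y ≠ vi := fun hh => by have := hRlt _ hyR; subst hh; omega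
    have hreach : (addStar G vi (insert x₀ P)).Reachable y vi := hry.symm.trans hxv
    obtain ⟨z, hzN, hzy⟩ := exists_attach_of_reachable' hGv hreach hyvi
    rcases Finset.mem_insert.mp hzN with rfl | hzP
    · exact hr₀u y ⟨hyR, hzy.symm⟩
    · exfalso
      obtain ⟨r, -, hru⟩ := hroot z (hRlt _ (hPR hzP))
      have h1 : y = r := hru y ⟨hyR, hzy.symm⟩
      have h2 : z = r := hru z ⟨hPR hzP, Reachable.refl _⟩
      rw [h1, ← h2] at hyP
      exact hyP hzP
  · have hxvi : x ≠ vi := fun h => hxv (h ▸ Reachable.refl _)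
    have hxi : (x : ℕ) < i := by
      have : (x : ℕ) ≠ i := fun h => hxvi (Fin.ext (by omega))
      omega
    obtain ⟨r, ⟨hrR, hrreach⟩, hru⟩ := hroot x hxi
    have hrP : r ∉ P := by
      intro hrP
      apply hxv
      exact (hrreach.mono le_addStar).trans
        ((addStar_adj_v' hGv hvN).mpr (Finset.mem_insert_of_mem hrP)).reachable
    refine ⟨r, ⟨Finset.mem_sdiff.mpr ⟨hrR, hrP⟩, hrreach.mono le_addStar⟩, ?_⟩
    rintro y ⟨hy, hry⟩
    exact hru y ⟨(Finset.mem_sdiff.mp hy).1, (reachable_addStar_iff hxv).mp hry⟩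

lemma forwardB (hvi : (vi : ℕ) = i) (h1i : 1 ≤ i) (hai : a i ≤ a (i + 1))
    (hai2 : a (i + 1) ≤ i)
    {G : SimpleGraph (Fin n)} {R P : Finset (Fin n)} {x₀ : Fin n}
    (hpred : stagePred a i G R) (hPR : P ⊆ R) (hx0lt : (x₀ : ℕ) < i)
    (hx0P : ∀ p ∈ P, ¬ G.Reachable x₀ p)
    (hPcard : P.card + 1 = a (i + 1) - a i) :
    stagePred a (i + 1) (addStar G vi (insert x₀ P)) (R \ P) := by
  obtain ⟨hedge, hac, hseq, hRlt, hroot, hcard⟩ := hpred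
  have hx0nP : x₀ ∉ P := fun h => hx0P x₀ h (Reachable.refl _)
  have hNlt : ∀ z ∈ insert x₀ P, (z : ℕ) < i := by
    intro z hz
    rcases Finset.mem_insert.mp hz with rfl | h
    · exact hx0lt
    · exact hRlt _ (hPR h)
  have hNsep : ∀ z1 ∈ insert x₀ P, ∀ z2 ∈ insert x₀ P,
      G.Reachable z1 z2 → z1 = z2 := by
    intro z1 h1 z2 h2 hr
    rcases Finset.mem_insert.mp h1 with he1 | h1' <;>
      rcases Finset.mem_insert.mp h2 with he2 | h2'
    · exact he1.trans he2.symm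
    · exact absurd (he1 ▸ hr) (hx0P _ h2')
    · exact absurd (he2 ▸ hr.symm) (hx0P _ h1')
    · obtain ⟨r, -, hru⟩ := hroot z1 (hRlt _ (hPR h1'))
      exact (hru z1 ⟨hPR h1', Reachable.refl _⟩).trans (hru z2 ⟨hPR h2', hr⟩).symm
  have hNcard : (insert x₀ P).card + a i = a (i + 1) := by
    rw [Finset.card_insert_of_notMem hx0nP]
    omega
  obtain ⟨hac', hseq'⟩ := stagePred_addStar_partial hvi h1i
    ⟨hedge, hac, hseq, hRlt, hroot, hcard⟩ hNlt hNcard hNsep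
  refine ⟨addStar_edge_bound hvi hedge hNlt, hac', hseq', ?_, ?_, ?_⟩
  · intro r hr
    have := hRlt _ (Finset.mem_sdiff.mp hr).1
    omega
  · exact rootsB hvi hedge hRlt hroot hPR hx0lt hx0P
  · rw [Finset.card_sdiff_of_subset hPR]
    have := Finset.card_le_card hPR
    omega

end BijB

section BijB2
open SimpleGraph

variable {n : ℕ} {a : ℕ → ℕ} {i : ℕ} {vi : Fin n}

lemma card_S2_eq_setB (hvi : (vi : ℕ) = i) (h1i : 1 ≤ i) (hai : a i ≤ a (i + 1))
    (hai2 : a (i + 1) ≤ i) :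
    ((stageSet n a (i + 1)).filter fun GR => vi ∉ GR.2).card = (setB n a i).card := by
  classical
  refine Finset.card_bij'
    (fun GR' _ => ((restrictBelow GR'.1 i,
        GR'.2 ∪ ((Finset.univ.filter fun w => GR'.1.Adj vi w).erase (x0of i vi GR'))),
        (x0of i vi GR', (Finset.univ.filter fun w => GR'.1.Adj vi w).erase (x0of i vi GR'))))
    (fun p _ => (addStar p.1.1 vi (insert p.2.1 p.2.2), p.1.2 \ p.2.2)) ?_ ?_ ?_ ?_
  -- S2 → B membership
  · intro GR' hGR'
    show ((restrictBelow GR'.1 i,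
        GR'.2 ∪ ((Finset.univ.filter fun w => GR'.1.Adj vi w).erase (x0of i vi GR'))),
        (x0of i vi GR', (Finset.univ.filter fun w => GR'.1.Adj vi w).erase (x0of i vi GR')))
        ∈ setB n a i
    obtain ⟨hmem, hviR'⟩ := Finset.mem_filter.mp hGR'
    have hpred' := mem_stageSet_iff.mp hmem
    obtain ⟨hdecomp, hNlt, hNcard, hsepN, hGedge, hacG, hseqG⟩ :=
      stage_succ_extract hvi h1i hpred'
    obtain ⟨hedge', hac', hseq', hRlt', hroot', hcard'⟩ := hpred'
    set G := restrictBelow GR'.1 i with hGdef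
    set N := Finset.univ.filter fun w => GR'.1.Adj vi w with hNdef
    set x₀ := x0of i vi GR' with hx0def
    have hGv : ∀ y, ¬ G.Adj vi y := fun y h => by have := (hGedge _ _ h).1; omega
    have hvN : vi ∉ N := fun h => by have := hNlt _ h; omega
    have hspec := x0of_spec (exU_attach hvi h1i ⟨hedge', hac', hseq', hRlt', hroot', hcard'⟩ hviR')
    obtain ⟨⟨hx₀N, r1, hr1R', hr1x₀⟩, hx₀u⟩ := hspec
    rw [← hNdef] at hx₀N
    have hx0lt : (x₀ : ℕ) < i := hNlt _ hx₀N
    have hreachA : ∀ x y : Fin n, (addStar G vi N).Reachable x y ↔ GR'.1.Reachable x y := by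
      intro x y; rw [hdecomp]
    have hdisj : ∀ z, z ∈ GR'.2 → z ∈ N.erase x₀ → False := fun z h1 h2 =>
      (Finset.mem_erase.mp h2).1
        (hx₀u z ⟨(Finset.mem_erase.mp h2).2, ⟨z, h1, Reachable.refl _⟩⟩)
    have hNpos : 1 ≤ N.card := Finset.card_pos.mpr ⟨x₀, hx₀N⟩
    rw [mem_setB_iff]
    refine ⟨mem_stageSet_iff.mpr ⟨hGedge, hacG, hseqG, ?_, ?_, ?_⟩, hx0lt,
      Finset.subset_union_right, ?_, ?_⟩
    · intro r hr
      rcases Finset.mem_union.mp hr with h | h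
      · have h1 := hRlt' _ h
        have : r ≠ vi := fun hh => hviR' (hh ▸ h)
        have : (r : ℕ) ≠ i := fun hh => this (Fin.ext (by omega))
        omega
      · exact hNlt _ (Finset.mem_erase.mp h).2
    · -- roots
      intro x hx
      have hxvi : x ≠ vi := fun h => by subst h; omega
      by_cases hxv : GR'.1.Reachable x vi
      · obtain ⟨z, hzN, hzreach⟩ :=
          exists_attach_of_reachable' hGv ((hreachA x vi).mpr hxv) hxvi
        by_cases hzx : z = x₀
        · refine ⟨r1, ⟨Finset.mem_union_left _ hr1R',
            (hzx ▸ hzreach).trans hr1x₀.symm⟩, ?_⟩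
          rintro y ⟨hy, hry⟩
          rcases Finset.mem_union.mp hy with h | h
          · obtain ⟨r2, -, hru2⟩ := hroot' x (by omega)
            have e1 : y = r2 := hru2 y ⟨h, (hreachA x y).mp (hry.mono le_addStar)⟩
            have e2 : r1 = r2 := hru2 r1 ⟨hr1R',
              (hreachA x r1).mp ((((hzx ▸ hzreach).trans hr1x₀.symm)).mono le_addStar)⟩
            rw [e1, e2]
          · exfalso
            obtain ⟨hyx₀, hyN⟩ := Finset.mem_erase.mp h
            exact hyx₀ (hsepN y hyN x₀ (hzx ▸ hzN) (hry.symm.trans (hzx ▸ hzreach)))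
        · refine ⟨z, ⟨Finset.mem_union_right _ (Finset.mem_erase.mpr ⟨hzx, hzN⟩),
            hzreach⟩, ?_⟩
          rintro y ⟨hy, hry⟩
          rcases Finset.mem_union.mp hy with h | h
          · exact absurd (hx₀u z ⟨hzN, ⟨y, h, hry.symm.trans hzreach⟩⟩) hzx
          · exact hsepN y (Finset.mem_erase.mp h).2 z hzN (hry.symm.trans hzreach)
      · have hnr : ¬ (addStar G vi N).Reachable x vi := fun h => hxv ((hreachA x vi).mp h)
        obtain ⟨r', ⟨hr'R', hr'reach⟩, hr'u⟩ := hroot' x (by omega)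
        have hGreach : G.Reachable x r' :=
          (reachable_addStar_iff hnr).mp ((hreachA x r').mpr hr'reach)
        refine ⟨r', ⟨Finset.mem_union_left _ hr'R', hGreach⟩, ?_⟩
        rintro y ⟨hy, hry⟩
        rcases Finset.mem_union.mp hy with h | h
        · exact hr'u y ⟨h, (hreachA x y).mp (hry.mono le_addStar)⟩
        · exfalso
          apply hnr
          exact (hry.mono le_addStar).trans
            ((addStar_adj_v' hGv hvN).mpr (Finset.mem_erase.mp h).2).reachable
    · -- cardinality of R
      have hdisj' : Disjoint GR'.2 (N.erase x₀) :=
        Finset.disjoint_left.mpr fun {z} h1 h2 => hdisj z h1 h2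
      rw [Finset.card_union_of_disjoint hdisj', Finset.card_erase_of_mem hx₀N]
      omega
    · -- cardinality of P
      show (N.erase x₀).card + 1 = a (i + 1) - a i
      rw [Finset.card_erase_of_mem hx₀N]
      omega
    · -- non-reachability
      intro r hr hre
      exact (Finset.mem_erase.mp hr).1 (hsepN x₀ hx₀N r (Finset.mem_erase.mp hr).2 hre).symm
  -- B → S2 membership
  · intro p hp
    obtain ⟨hmem, hx0lt, hsub, hcardP, hnreach⟩ := mem_setB_iff.mp hp
    have hpred := mem_stageSet_iff.mp hmem
    refine Finset.mem_filter.mpr ⟨mem_stageSet_iff.mpr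
      (forwardB hvi h1i hai hai2 hpred hsub hx0lt hnreach hcardP), ?_⟩
    intro hvimem
    have := hpred.2.2.2.1 _ (Finset.mem_sdiff.mp hvimem).1
    omega
  -- left inverse
  · intro GR' hGR'
    obtain ⟨hmem, hviR'⟩ := Finset.mem_filter.mp hGR'
    have hpred' := mem_stageSet_iff.mp hmem
    obtain ⟨hdecomp, hNlt, hNcard, hsepN, hGedge, hacG, hseqG⟩ :=
      stage_succ_extract hvi h1i hpred'
    obtain ⟨hedge', hac', hseq', hRlt', hroot', hcard'⟩ := hpred'
    set G := restrictBelow GR'.1 i with hGdef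
    set N := Finset.univ.filter fun w => GR'.1.Adj vi w with hNdef
    set x₀ := x0of i vi GR' with hx0def
    have hspec := x0of_spec (exU_attach hvi h1i ⟨hedge', hac', hseq', hRlt', hroot', hcard'⟩ hviR')
    obtain ⟨⟨hx₀N, r1, hr1R', hr1x₀⟩, hx₀u⟩ := hspec
    have hdisj : ∀ z, z ∈ GR'.2 → z ∈ N.erase x₀ → False := fun z h1 h2 =>
      (Finset.mem_erase.mp h2).1
        (hx₀u z ⟨(Finset.mem_erase.mp h2).2, ⟨z, h1, Reachable.refl _⟩⟩)
    have hsetid : ((GR'.2 ∪ N.erase x₀) \ (N.erase x₀)) = GR'.2 := by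
      ext z
      simp only [Finset.mem_sdiff, Finset.mem_union]
      constructor
      · rintro ⟨h1 | h1, h2⟩
        · exact h1
        · exact absurd h1 h2
      · intro h
        exact ⟨Or.inl h, fun hc => hdisj z h hc⟩
    show (addStar G vi (insert x₀ (N.erase x₀)), (GR'.2 ∪ N.erase x₀) \ (N.erase x₀)) = GR'
    rw [hsetid, Finset.insert_erase hx₀N, hdecomp]
  -- right inverse
  · intro p hp
    obtain ⟨hmem, hx0lt, hsub, hcardP, hnreach⟩ := mem_setB_iff.mp hp
    have hpred := mem_stageSet_iff.mp hmem
    obtain ⟨hedge, hac, hseq, hRlt, hroot, hcard⟩ := hpred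
    have hx0nP : p.2.1 ∉ p.2.2 := fun h => hnreach _ h (Reachable.refl _)
    have hNlt' : ∀ z ∈ insert p.2.1 p.2.2, (z : ℕ) < i := by
      intro z hz
      rcases Finset.mem_insert.mp hz with he | h
      · rw [he]; exact hx0lt
      · exact hRlt _ (hsub h)
    have hGv : ∀ y, ¬ p.1.1.Adj vi y := fun y h => by have := (hedge _ _ h).1; omega
    have hvN' : vi ∉ insert p.2.1 p.2.2 := fun h => by have := hNlt' _ h; omega
    have hg : restrictBelow (addStar p.1.1 vi (insert p.2.1 p.2.2)) i = p.1.1 :=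
      restrictBelow_addStar hvi hedge hNlt'
    have hfilter : (Finset.univ.filter fun w =>
        (addStar p.1.1 vi (insert p.2.1 p.2.2)).Adj vi w) = insert p.2.1 p.2.2 :=
      filter_adj_addStar hGv hvN'
    have hpred'' : stagePred a (i + 1) (addStar p.1.1 vi (insert p.2.1 p.2.2))
        (p.1.2 \ p.2.2) :=
      forwardB hvi h1i hai hai2 ⟨hedge, hac, hseq, hRlt, hroot, hcard⟩ hsub hx0lt
        hnreach hcardP
    have hviR'' : vi ∉ p.1.2 \ p.2.2 := fun h => by
      have := hRlt _ (Finset.mem_sdiff.mp h).1; omega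
    have hspec := x0of_spec (GR' := (addStar p.1.1 vi (insert p.2.1 p.2.2), p.1.2 \ p.2.2))
      (exU_attach hvi h1i hpred'' hviR'')
    obtain ⟨-, hx₀u⟩ := hspec
    obtain ⟨r₀, ⟨hr₀R, hr₀reach⟩, -⟩ := hroot p.2.1 hx0lt
    have hr₀P : r₀ ∉ p.2.2 := fun h => hnreach _ h hr₀reach
    have hx0eq : p.2.1 = x0of i vi (addStar p.1.1 vi (insert p.2.1 p.2.2), p.1.2 \ p.2.2) := by
      apply hx₀u
      constructor
      · show p.2.1 ∈ Finset.univ.filter fun w =>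
          (addStar p.1.1 vi (insert p.2.1 p.2.2)).Adj vi w
        rw [hfilter]
        exact Finset.mem_insert_self _ _
      · refine ⟨r₀, Finset.mem_sdiff.mpr ⟨hr₀R, hr₀P⟩, ?_⟩
        show (restrictBelow (addStar p.1.1 vi (insert p.2.1 p.2.2)) i).Reachable r₀ p.2.1
        rw [hg]
        exact hr₀reach.symm
    show ((restrictBelow (addStar p.1.1 vi (insert p.2.1 p.2.2)) i,
        (p.1.2 \ p.2.2) ∪ ((Finset.univ.filter fun w =>
          (addStar p.1.1 vi (insert p.2.1 p.2.2)).Adj vi w).erase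
          (x0of i vi (addStar p.1.1 vi (insert p.2.1 p.2.2), p.1.2 \ p.2.2)))),
        (x0of i vi (addStar p.1.1 vi (insert p.2.1 p.2.2), p.1.2 \ p.2.2),
        (Finset.univ.filter fun w =>
          (addStar p.1.1 vi (insert p.2.1 p.2.2)).Adj vi w).erase
          (x0of i vi (addStar p.1.1 vi (insert p.2.1 p.2.2), p.1.2 \ p.2.2)))) = p
    rw [hg, hfilter, ← hx0eq, Finset.erase_insert hx0nP,
      Finset.sdiff_union_of_subset hsub]

end BijB2
section Assembly
open SimpleGraph

variable {n : ℕ}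

lemma card_stage_succ (a : ℕ → ℕ) (i : ℕ) (h1i : 1 ≤ i) (hin : i + 1 ≤ n)
    (hai : a i ≤ a (i + 1)) (hai2 : a (i + 1) ≤ i) (hai1 : a i + 1 ≤ i) :
    (stageSet n a (i + 1)).card = (stageSet n a i).card *
      (chooseZ (i - a i - 1) ((a (i + 1) : ℤ) - (a i : ℤ) - 1) * (i + 1)
        + (i - a i - 1).choose (a (i + 1) - a i)) := by
  classical
  obtain ⟨vi, hvi⟩ : ∃ vi : Fin n, (vi : ℕ) = i := ⟨⟨i, by omega⟩, rfl⟩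
  have hsplit := Finset.card_filter_add_card_filter_not
    (s := stageSet n a (i + 1)) (p := fun GR => vi ∈ GR.2)
  have e1 := card_S1_eq_setA hvi h1i hai hai2
  have e2 := card_S2_eq_setB hvi h1i hai hai2
  have e3 := card_setA (n := n) (a := a) (i := i)
  have e4 := card_setB (n := n) (a := a) (i := i) (by omega) hai hai1
  have htot : (stageSet n a (i + 1)).card =
      (stageSet n a i).card * Nat.choose (i - a i) (a (i + 1) - a i)
      + (stageSet n a i).card *
        (i * chooseZ (i - a i - 1) ((a (i + 1) : ℤ) - a i - 1)) := by
    rw [← e3, ← e4, ← e1, ← e2]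
    exact hsplit.symm
  rw [htot]
  by_cases hd : a (i + 1) - a i = 0
  · have hz : ((a (i + 1) : ℤ) - a i - 1) < 0 := by
      have : a (i + 1) ≤ a i := by omega
      push_cast
      omega
    rw [chooseZ_neg _ hz, hd]
    simp
  · have hd1 : 1 ≤ a (i + 1) - a i := by omega
    have hcz : chooseZ (i - a i - 1) ((a (i + 1) : ℤ) - a i - 1)
        = Nat.choose (i - a i - 1) (a (i + 1) - a i - 1) := by
      have : ((a (i + 1) : ℤ) - a i - 1) = ((a (i + 1) - a i - 1 : ℕ) : ℤ) := by
        push_cast [Nat.sub_sub]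
        omega
      rw [this, chooseZ_coe]
    have hpascal : (i - a i).choose (a (i + 1) - a i)
        = (i - a i - 1).choose (a (i + 1) - a i - 1)
          + (i - a i - 1).choose (a (i + 1) - a i) := by
      have h1 : i - a i = (i - a i - 1) + 1 := by omega
      have h2 : a (i + 1) - a i = (a (i + 1) - a i - 1) + 1 := by omega
      rw [h1, h2, Nat.choose_succ_succ]
      simp
    rw [hcz, hpascal]
    ring

lemma card_stage_prod (hn : 2 ≤ n) (a : ℕ → ℕ)
    (hmono : ∀ i j, 1 ≤ i → i ≤ j → j ≤ n → a i ≤ a j)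
    (ha1 : a 1 = 0)
    (hle : ∀ i, 1 ≤ i → i ≤ n → a i ≤ i - 1) :
    ∀ m, 1 ≤ m → m ≤ n - 1 →
      (stageSet n a m).card = ∏ i ∈ Finset.Icc 1 (m - 1),
        (chooseZ (i - a i - 1) ((a (i + 1) : ℤ) - (a i : ℤ) - 1) * (i + 1)
          + (i - a i - 1).choose (a (i + 1) - a i)) := by
  intro m
  induction m with
  | zero => omega
  | succ m ih =>
    intro h1 h2
    by_cases hm : m = 0
    · subst hm
      have he : Finset.Icc 1 (0 + 1 - 1) = ∅ := by
        apply Finset.Icc_eq_empty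
        omega
      rw [he, Finset.prod_empty]
      exact card_stageSet_one (by omega) ha1
    · have h1m : 1 ≤ m := by omega
      have hrec := card_stage_succ (n := n) a m h1m (by omega)
        (hmono m (m + 1) h1m (by omega) (by omega))
        (by have := hle (m + 1) (by omega) (by omega); omega)
        (by have := hle m h1m (by omega); omega)
      rw [hrec, ih h1m (by omega)]
      have : Finset.Icc 1 (m + 1 - 1) = Finset.Icc 1 ((m - 1) + 1) := by
        congr 1
        omega
      rw [this, Finset.prod_Icc_succ_top (by omega), show m - 1 + 1 = m from by omega]

end Assembly



/-- The number of labeled trees on `n` vertices with fully specified uncover sequence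
`(a_1, …, a_n)` equals
`∏_{i=1}^{n-2} (C(i - a_i - 1, a_{i+1} - a_i - 1)·(i+1) + C(i - a_i - 1, a_{i+1} - a_i))`. -/
theorem full_uncover_sequence_count (n : ℕ) (hn : 2 ≤ n) (a : ℕ → ℕ)
    (hmono : ∀ i j, 1 ≤ i → i ≤ j → j ≤ n → a i ≤ a j)
    (ha1 : a 1 = 0) (han : a n = n - 1)
    (hle : ∀ i, 1 ≤ i → i ≤ n → a i ≤ i - 1) :
    ((treeSet n).filter fun T => ∀ i, 1 ≤ i → i ≤ n → uncoverEdges T i = a i).card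
      = ∏ i ∈ Finset.Icc 1 (n - 2),
          (chooseZ (i - a i - 1) ((a (i + 1) : ℤ) - (a i : ℤ) - 1) * (i + 1)
            + (i - a i - 1).choose (a (i + 1) - a i)) := by
  have hseqn : a (n - 1) ≤ n - 2 := by
    have := hle (n - 1) (by omega) (by omega)
    omega
  rw [card_treeSeq_eq_stage hn a han hseqn]
  rw [card_stage_prod hn a hmono ha1 hle (n - 1) (by omega) le_rfl,
    show n - 1 - 1 = n - 2 from by omega]
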